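/- arXiv:2105.14591 — 6 statements merged into one kernel-verified Lean document; each statement's English description precedes it below -/
import Mathlib

section
/- Let λ : ℕ³ → [0,∞) be summable, and suppose that for all s, t in the closed complex unit disk, Σ_{i,k≥0} (s^i - 1)(t^k - 1) λ(i,0,k) = 0. Then λ(i,0,k) = 0 whenever i > 0 and k > 0. -/
/-- If `λ : ℕ³ → [0,∞)` is summable and
`Σ_{i,k} (s^i - 1)(t^k - 1) λ(i,0,k) = 0` for all `s, t` in the closed complex unit
disk, then `λ(i,0,k) = 0` whenever `i > 0` and `k > 0`. -/
theorem vanishing_cross_terms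
    (L : ℕ × ℕ × ℕ → ℝ) (hL : Summable L) (hpos : ∀ v, 0 ≤ L v)
    (hzero : ∀ s t : ℂ, ‖s‖ ≤ 1 → ‖t‖ ≤ 1 →
      (∑' i : ℕ, ∑' k : ℕ, (s ^ i - 1) * (t ^ k - 1) * (L (i, 0, k) : ℂ)) = 0) :
    ∀ i k : ℕ, 0 < i → 0 < k → L (i, 0, k) = 0 := by
  -- define g on ℕ × ℕ : the cross terms
  set g : ℕ × ℕ → ℝ := fun p => if p.1 = 0 ∨ p.2 = 0 then 0 else L (p.1, 0, p.2) with hg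
  have hgnn : ∀ p, 0 ≤ g p := by
    intro p; by_cases h : p.1 = 0 ∨ p.2 = 0 <;> simp [hg, h, hpos]
  have hinj : Function.Injective (fun p : ℕ × ℕ => (p.1, 0, p.2)) := by
    intro a b h
    simp only [Prod.mk.injEq] at h
    exact Prod.ext h.1 h.2.2
  have hsum : Summable g := by
    refine Summable.of_nonneg_of_le hgnn (fun p => ?_) (hL.comp_injective hinj)
    by_cases h : p.1 = 0 ∨ p.2 = 0 <;> simp [hg, h, hpos]
  -- pointwise identity with the complex terms at s = t = 0
  have hpt : ∀ i k : ℕ,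
      ((0:ℂ) ^ i - 1) * ((0:ℂ) ^ k - 1) * (L (i, 0, k) : ℂ) = (g (i, k) : ℂ) := by
    intro i k
    rcases Nat.eq_zero_or_pos i with hi | hi
    · subst hi; simp [hg]
    rcases Nat.eq_zero_or_pos k with hk | hk
    · subst hk; simp [hg]
    have : ¬(i = 0 ∨ k = 0) := by omega
    simp [hg, this, zero_pow hi.ne', zero_pow hk.ne']
  have h0 := hzero 0 0 (by simp) (by simp)
  have hiter : (∑' i : ℕ, ∑' k : ℕ, (g (i, k) : ℝ)) = 0 := by
    have : ((∑' i : ℕ, ∑' k : ℕ, (g (i, k) : ℝ) : ℝ) : ℂ) = 0 := by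
      rw [← h0]
      push_cast [Complex.ofReal_tsum]
      exact (tsum_congr fun i => tsum_congr fun k => (hpt i k).symm)
    exact_mod_cast this
  intro i k hi hk
  -- now L (i,0,k) = g (i,k) ≤ iterated sum = 0
  have hfac : ∀ i, Summable (fun k => g (i, k)) := fun i => hsum.prod_factor i
  have h1 : g (i, k) ≤ ∑' k, g (i, k) := Summable.le_tsum (hfac i) k fun _ _ => hgnn _
  have houter : Summable fun i => ∑' k, g (i, k) :=
    ((summable_prod_of_nonneg hgnn).mp hsum).2
  have h2 : (∑' k, g (i, k)) ≤ ∑' i, ∑' k, g (i, k) :=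
    Summable.le_tsum houter i fun _ _ => tsum_nonneg fun _ => hgnn _
  have hgik : g (i, k) = L (i, 0, k) := by
    have : ¬(i = 0 ∨ k = 0) := by omega
    simp [hg, this]
  have := le_antisymm (by rw [← hiter] at *; linarith) (hpos _)
  rw [← hgik]
  linarith [h1, h2, hiter, hgnn (i, k)]
end

section
/- Let (rᵢ)_{i≥0} be nonnegative reals with r₀ > 0, r₁ > 0, r₂ > 0, satisfying the recursion rᵢ = (r₂ / (r₁² (i-1))) Σ_{k=1}^{i-1} r_k r_{i-k} for all i ≥ 2. Then rᵢ = r₁ (r₂/r₁)^{i-1} for all i ≥ 1. -/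
/-- The recursion `rᵢ = (r₂/(r₁²(i-1))) Σ_{k=1}^{i-1} r_k r_{i-k}` for `i ≥ 2`,
with `r₀, r₁, r₂ > 0` and all `rᵢ ≥ 0`, forces the geometric form
`rᵢ = r₁ (r₂/r₁)^{i-1}` for all `i ≥ 1`. -/
theorem recursion_forces_geometric
    (r : ℕ → ℝ) (hnonneg : ∀ i, 0 ≤ r i)
    (h0 : 0 < r 0) (h1 : 0 < r 1) (h2 : 0 < r 2)
    (hrec : ∀ i : ℕ, 2 ≤ i →
      r i = r 2 / (r 1 ^ 2 * ((i : ℝ) - 1)) * ∑ k ∈ Finset.Ico 1 i, r k * r (i - k)) :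
    ∀ i : ℕ, 1 ≤ i → r i = r 1 * (r 2 / r 1) ^ (i - 1) := by
  intro i
  induction i using Nat.strong_induction_on with
  | _ i ih =>
    intro hi
    rcases Nat.lt_or_ge i 2 with h | h
    · interval_cases i
      · simp
    · have hterm : ∀ k ∈ Finset.Ico 1 i, r k * r (i - k)
          = r 1 ^ 2 * (r 2 / r 1) ^ (i - 2) := by
        intro k hk
        simp only [Finset.mem_Ico] at hk
        rw [ih k hk.2 hk.1, ih (i - k) (by omega) (by omega)]
        have hkk : (k - 1) + (i - k - 1) = i - 2 := by omega
        rw [← hkk, pow_add]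
        ring
      have hsum : ∑ k ∈ Finset.Ico 1 i, r k * r (i - k)
          = ((i : ℝ) - 1) * (r 1 ^ 2 * (r 2 / r 1) ^ (i - 2)) := by
        rw [Finset.sum_congr rfl hterm, Finset.sum_const, Nat.card_Ico, nsmul_eq_mul]
        push_cast [Nat.cast_sub (by omega : 1 ≤ i)]
        ring
      have hi1 : (i : ℝ) - 1 ≠ 0 := by
        have : (2 : ℝ) ≤ (i : ℝ) := by exact_mod_cast h
        linarith
      have hpow : (r 2 / r 1) ^ (i - 1) = (r 2 / r 1) ^ (i - 2) * (r 2 / r 1) := by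
        rw [← pow_succ]
        congr 1
        omega
      rw [hrec i h, hsum, hpow]
      field_simp
end

section
/- For the negative binomial thinning process, the conditional pgf E[z^{X_t} | X_{t-1} = x] equals (p/(1-qz))^{θ(1-ρ)} · ₂F₁(θρ, -x; θ; 1-z), where q = 1-p. -/
open Finset



/-- Negative binomial pmf: `Γ(α+k)/(Γ(α) k!) p^α (1-p)^k`. -/
noncomputable def nbPmf (α p : ℝ) (k : ℕ) : ℝ :=
  Real.Gamma (α + k) / (Real.Gamma α * (Nat.factorial k)) * p ^ α * (1 - p) ^ k

/-- Beta function `B(a,b) = Γ(a)Γ(b)/Γ(a+b)`. -/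
noncomputable def betaFn (a b : ℝ) : ℝ :=
  Real.Gamma a * Real.Gamma b / Real.Gamma (a + b)

/-- Beta-binomial pmf `C(n,k) B(a+k, b+n-k)/B(a,b)`. -/
noncomputable def betaBinPmf (n : ℕ) (a b : ℝ) (k : ℕ) : ℝ :=
  (n.choose k : ℝ) * betaFn (a + k) (b + (n - k : ℕ)) / betaFn a b

/-- Gauss' hypergeometric function `₂F₁(a, -x; c; w)` with `-x` a nonpositive
integer, so the series terminates: a polynomial of degree `x` in `w`. -/
noncomputable def hyp2F1neg (a : ℝ) (x : ℕ) (c : ℝ) (w : ℝ) : ℝ :=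
  ∑ n ∈ Finset.range (x + 1),
    ((ascPochhammer ℝ n).eval a * (ascPochhammer ℝ n).eval (-(x : ℝ)) /
        (ascPochhammer ℝ n).eval c) * w ^ n / (Nat.factorial n)



noncomputable def pochR (n : ℕ) (t : ℝ) : ℝ := (ascPochhammer ℝ n).eval t

lemma pochR_zero (t : ℝ) : pochR 0 t = 1 := by simp [pochR]

lemma pochR_succ (n : ℕ) (t : ℝ) : pochR (n + 1) t = pochR n t * (t + n) := by
  simp [pochR, ascPochhammer_succ_right]

lemma pochR_pos {t : ℝ} (ht : 0 < t) (n : ℕ) : 0 < pochR n t := by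
  induction n with
  | zero => simp [pochR_zero]
  | succ n ih => rw [pochR_succ]; positivity

lemma pochR_add (n m : ℕ) (t : ℝ) : pochR (n + m) t = pochR n t * pochR m (t + n) := by
  rw [pochR, pochR, pochR, ← ascPochhammer_mul]
  simp [Polynomial.eval_comp]

lemma Gamma_add_nat {a : ℝ} (ha : 0 < a) (n : ℕ) :
    Real.Gamma (a + n) = Real.Gamma a * pochR n a := by
  induction n with
  | zero => simp [pochR_zero]
  | succ n ih =>
    have h1 : a + (n + 1 : ℕ) = (a + n) + 1 := by push_cast; ring
    rw [h1, Real.Gamma_add_one (by positivity), ih, pochR_succ]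
    ring

lemma pochR_vandermonde (u v : ℝ) (m : ℕ) :
    ∑ j ∈ range (m + 1), (m.choose j : ℝ) * pochR j u * pochR (m - j) v = pochR m (u + v) := by
  induction m with
  | zero => simp [pochR_zero]
  | succ m ih =>
    have key : ∀ j ∈ range (m + 1),
        ((m + 1).choose (j + 1) : ℝ) * pochR (j + 1) u * pochR (m + 1 - (j + 1)) v
          = (m.choose j : ℝ) * pochR j u * (u + j) * pochR (m - j) v
            + (m.choose (j + 1) : ℝ) * pochR (j + 1) u * pochR (m - j) v := by
      intro j hj
      rw [Nat.succ_sub_succ, Nat.choose_succ_succ, pochR_succ]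
      push_cast; ring
    rw [Finset.sum_range_succ' _ (m + 1)]
    rw [Finset.sum_congr rfl key, Finset.sum_add_distrib]
    -- second piece: shift back
    have h2 : ∑ j ∈ range (m + 1), (m.choose (j + 1) : ℝ) * pochR (j + 1) u * pochR (m - j) v
        + ((m + 1).choose 0 : ℝ) * pochR 0 u * pochR (m + 1 - 0) v
        = ∑ j ∈ range (m + 1), (m.choose j : ℝ) * pochR j u * pochR (m - j) v * (v + (m - j : ℕ)) := by
      have : ∑ j ∈ range (m + 1), (m.choose j : ℝ) * pochR j u * pochR (m + 1 - j) v
          = ∑ j ∈ range (m + 1), (m.choose (j + 1) : ℝ) * pochR (j + 1) u * pochR (m - j) v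
            + ((m + 1).choose 0 : ℝ) * pochR 0 u * pochR (m + 1 - 0) v := by
        have := Finset.sum_range_succ' (fun j => (m.choose j : ℝ) * pochR j u * pochR (m + 1 - j) v) (m + 1)
        rw [Finset.sum_range_succ] at this
        simpa [Nat.succ_sub_succ, Nat.choose_eq_zero_of_lt (Nat.lt_succ_self m)] using this
      rw [← this]
      refine Finset.sum_congr rfl fun j hj => ?_
      have hjm : j ≤ m := Nat.lt_succ_iff.mp (mem_range.mp hj)
      have : m + 1 - j = (m - j) + 1 := by omega
      rw [this, pochR_succ]; ring
    rw [add_assoc, h2, ← Finset.sum_add_distrib]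
    have h3 : ∀ j ∈ range (m + 1),
        (m.choose j : ℝ) * pochR j u * (u + j) * pochR (m - j) v
          + (m.choose j : ℝ) * pochR j u * pochR (m - j) v * (v + (m - j : ℕ))
        = ((m.choose j : ℝ) * pochR j u * pochR (m - j) v) * (u + v + m) := by
      intro j hj
      have hjm : j ≤ m := Nat.lt_succ_iff.mp (mem_range.mp hj)
      have : ((m - j : ℕ) : ℝ) = (m : ℝ) - j := by
        push_cast [Nat.cast_sub hjm]; ring
      rw [this]; ring
    rw [Finset.sum_congr rfl h3, ← Finset.sum_mul, ih, pochR_succ]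

lemma inner_sum' (a b : ℝ) (x n : ℕ) (hn : n ≤ x) :
    ∑ k ∈ range (x + 1), ((x.choose k : ℝ) * (k.choose n : ℝ)) * pochR k a * pochR (x - k) b
      = (x.choose n : ℝ) * pochR n a * pochR (x - n) (a + n + b) := by
  have hsub : Finset.Ico n (x + 1) ⊆ range (x + 1) :=
    fun k hk => mem_range.mpr (mem_Ico.mp hk).2
  rw [← Finset.sum_subset hsub (by
    intro k hk hk2
    have : k < n := by
      rcases Nat.lt_or_ge k n with h | h
      · exact h
      · exact absurd (mem_Ico.mpr ⟨h, mem_range.mp hk⟩) hk2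
    rw [Nat.choose_eq_zero_of_lt this]
    push_cast; ring)]
  rw [Finset.sum_Ico_eq_sum_range]
  have hxn : x + 1 - n = (x - n) + 1 := by omega
  rw [hxn]
  have key : ∀ i ∈ range ((x - n) + 1),
      ((x.choose (n + i) : ℝ) * ((n + i).choose n : ℝ)) * pochR (n + i) a * pochR (x - (n + i)) b
        = ((x.choose n : ℝ) * pochR n a) * (((x - n).choose i : ℝ) * pochR i (a + n) * pochR ((x - n) - i) b) := by
    intro i hi
    have hix : i ≤ x - n := Nat.lt_succ_iff.mp (mem_range.mp hi)
    have h1 : n + i ≤ x := by omega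
    have h2 : x - (n + i) = (x - n) - i := by omega
    have h3 : (x.choose (n + i)) * ((n + i).choose n) = x.choose n * (x - n).choose ((n + i) - n) :=
      Nat.choose_mul (Nat.le_add_right n i)
    have h4 : (n + i) - n = i := by omega
    rw [h4] at h3
    have h3' : ((x.choose (n + i) : ℕ) : ℝ) * (((n + i).choose n : ℕ) : ℝ)
        = ((x.choose n : ℕ) : ℝ) * (((x - n).choose i : ℕ) : ℝ) := by exact_mod_cast h3
    rw [h2, pochR_add n i a, h3']
    ring
  rw [Finset.sum_congr rfl key, ← Finset.mul_sum, pochR_vandermonde (a + n) b (x - n)]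

lemma pochR_neg (x : ℕ) : ∀ n, n ≤ x → pochR n (-(x : ℝ)) = (-1) ^ n * (x.descFactorial n : ℝ) := by
  intro n
  induction n with
  | zero => intro _; simp [pochR_zero]
  | succ n ih =>
    intro hn
    have hn' : n ≤ x := by omega
    rw [pochR_succ, ih hn', Nat.descFactorial_succ]
    have : ((x - n : ℕ) : ℝ) = (x : ℝ) - n := by
      rw [Nat.cast_sub hn']
    push_cast [this]
    ring

lemma pochR_neg' (x n : ℕ) (hn : n ≤ x) :
    pochR n (-(x : ℝ)) = (-1) ^ n * (n.factorial : ℝ) * (x.choose n : ℝ) := by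
  rw [pochR_neg x n hn, Nat.descFactorial_eq_factorial_mul_choose]
  push_cast; ring

lemma betaBin_eq (a b : ℝ) (ha : 0 < a) (hb : 0 < b) (x k : ℕ) (hk : k ≤ x) :
    betaBinPmf x a b k = (x.choose k : ℝ) * pochR k a * pochR (x - k) b / pochR x (a + b) := by
  have hGa := Real.Gamma_pos_of_pos ha
  have hGb := Real.Gamma_pos_of_pos hb
  have hGab := Real.Gamma_pos_of_pos (by positivity : (0:ℝ) < a + b)
  have harg : a + (k : ℝ) + (b + ((x - k : ℕ) : ℝ)) = (a + b) + (x : ℝ) := by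
    rw [Nat.cast_sub hk]; ring
  rw [betaBinPmf, betaFn, betaFn, harg, Gamma_add_nat ha k, Gamma_add_nat hb (x - k),
    Gamma_add_nat (by positivity : (0:ℝ) < a + b) x]
  have hPx := pochR_pos (by positivity : (0:ℝ) < a + b) x
  field_simp

lemma pow_expand (z : ℝ) (x k : ℕ) (hk : k ≤ x) :
    z ^ k = ∑ n ∈ range (x + 1), (z - 1) ^ n * (k.choose n : ℝ) := by
  have h1 : z ^ k = ((z - 1) + 1) ^ k := by ring_nf
  rw [h1, add_pow]
  simp only [one_pow, mul_one]
  apply Finset.sum_subset (Finset.range_subset_range.mpr (by omega))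
  intro n _ hn2
  have : k < n := by
    rcases Nat.lt_or_ge k n with h | h
    · exact h
    · exact absurd (mem_range.mpr (by omega)) hn2
  rw [Nat.choose_eq_zero_of_lt this]
  simp

lemma betaBin_pgf (a b z : ℝ) (ha : 0 < a) (hb : 0 < b) (x : ℕ) :
    ∑ k ∈ range (x + 1), betaBinPmf x a b k * z ^ k = hyp2F1neg a x (a + b) (1 - z) := by
  have hab : (0:ℝ) < a + b := by positivity
  have hPx : pochR x (a + b) ≠ 0 := ne_of_gt (pochR_pos hab x)
  have l1 : ∀ k ∈ range (x + 1), betaBinPmf x a b k * z ^ k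
      = ((x.choose k : ℝ) * pochR k a * pochR (x - k) b * z ^ k) / pochR x (a + b) := by
    intro k hk
    rw [betaBin_eq a b ha hb x k (Nat.lt_succ_iff.mp (mem_range.mp hk))]
    ring
  have r1 : ∀ n ∈ range (x + 1),
      ((ascPochhammer ℝ n).eval a * (ascPochhammer ℝ n).eval (-(x : ℝ)) /
        (ascPochhammer ℝ n).eval (a + b)) * (1 - z) ^ n / (Nat.factorial n)
      = ((x.choose n : ℝ) * pochR n a * pochR (x - n) (a + n + b) * (z - 1) ^ n) / pochR x (a + b) := by
    intro n hn
    have hn' : n ≤ x := Nat.lt_succ_iff.mp (mem_range.mp hn)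
    have e1 : (1 - z) ^ n = (-1) ^ n * (z - 1) ^ n := by
      rw [show (1 : ℝ) - z = -(z - 1) by ring, neg_pow]
    have e2 : pochR x (a + b) = pochR n (a + b) * pochR (x - n) (a + n + b) := by
      rw [show a + (n:ℝ) + b = (a + b) + n by ring, ← pochR_add, Nat.add_sub_cancel' hn']
    have hPn : pochR n (a + b) ≠ 0 := ne_of_gt (pochR_pos hab n)
    have hfn : (Nat.factorial n : ℝ) ≠ 0 := Nat.cast_ne_zero.mpr (Nat.factorial_ne_zero n)
    show pochR n a * pochR n (-(x:ℝ)) / pochR n (a + b) * (1 - z) ^ n / (Nat.factorial n) = _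
    have hQ : pochR (x - n) (a + (n : ℝ) + b) ≠ 0 := ne_of_gt (pochR_pos (by positivity) _)
    have e3 : ((-1 : ℝ)) ^ n * (-1 : ℝ) ^ n = 1 := by
      rw [← pow_add, ← two_mul, pow_mul, neg_one_sq, one_pow]
    rw [pochR_neg' x n hn', e1, e2,
      show pochR n a * ((-1 : ℝ) ^ n * ↑n.factorial * ↑(x.choose n)) / pochR n (a + b) * ((-1) ^ n * (z - 1) ^ n) / ↑n.factorial
        = ((-1 : ℝ) ^ n * (-1) ^ n) * (pochR n a * ↑n.factorial * ↑(x.choose n) * (z - 1) ^ n) / (pochR n (a + b) * ↑n.factorial) from by ring,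
      e3, one_mul]
    field_simp
  rw [Finset.sum_congr rfl l1, ← Finset.sum_div, hyp2F1neg, Finset.sum_congr rfl r1,
    ← Finset.sum_div]
  congr 1
  calc ∑ k ∈ range (x + 1), (x.choose k : ℝ) * pochR k a * pochR (x - k) b * z ^ k
      = ∑ k ∈ range (x + 1), ∑ n ∈ range (x + 1),
          ((x.choose k : ℝ) * (k.choose n : ℝ)) * pochR k a * pochR (x - k) b * (z - 1) ^ n := by
        refine Finset.sum_congr rfl fun k hk => ?_
        rw [pow_expand z x k (Nat.lt_succ_iff.mp (mem_range.mp hk)), Finset.mul_sum]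
        exact Finset.sum_congr rfl fun n _ => by ring
    _ = ∑ n ∈ range (x + 1), ∑ k ∈ range (x + 1),
          ((x.choose k : ℝ) * (k.choose n : ℝ)) * pochR k a * pochR (x - k) b * (z - 1) ^ n :=
        Finset.sum_comm
    _ = ∑ n ∈ range (x + 1), (x.choose n : ℝ) * pochR n a * pochR (x - n) (a + n + b) * (z - 1) ^ n := by
        refine Finset.sum_congr rfl fun n hn => ?_
        have hn' : n ≤ x := Nat.lt_succ_iff.mp (mem_range.mp hn)
        rw [← Finset.sum_mul, inner_sum' a b x n hn']

set_option maxHeartbeats 1000000 in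
theorem binom_tsum (α : ℝ) (hα : 0 < α) {t : ℝ} (h0 : 0 ≤ t) (h1 : t < 1) :
    ∑' k : ℕ, pochR k α / (Nat.factorial k) * t ^ k = (1 - t) ^ (-α) := by
  set c : ℕ → ℝ := fun k => pochR k α / (Nat.factorial k) with hc_def
  set r : ℝ := (1 + t) / 2 with hr_def
  have hr0 : 0 < r := by rw [hr_def]; linarith
  have htr : t < r := by rw [hr_def]; linarith
  have hr1 : r < 1 := by rw [hr_def]; linarith
  set r' : ℝ := (1 + r) / 2 with hr'_def
  have hrr' : r < r' := by rw [hr'_def]; linarith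
  have hr'1 : r' < 1 := by rw [hr'_def]; linarith
  have hc : ∀ k, 0 < c k := fun k =>
    div_pos (pochR_pos hα k) (by exact_mod_cast Nat.factorial_pos k)
  have hcrec : ∀ k : ℕ, c (k + 1) * (k + 1) = c k * (α + k) := by
    intro k
    have hf : ((Nat.factorial k : ℝ)) ≠ 0 := Nat.cast_ne_zero.mpr (Nat.factorial_ne_zero k)
    simp only [hc_def, pochR_succ, Nat.factorial_succ]
    push_cast
    field_simp
  set u : ℕ → ℝ := fun k => c k * (k * r ^ (k - 1)) with hu_def
  have hu : Summable u := by
    apply summable_of_ratio_norm_eventually_le hr'1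
    have hN := Nat.le_ceil (α * r / (r' - r))
    set N : ℕ := max 1 ⌈α * r / (r' - r)⌉₊ with hN_def
    filter_upwards [Filter.eventually_ge_atTop N] with k hk
    have hk1 : 1 ≤ k := le_trans (le_max_left _ _) hk
    have hkN : (⌈α * r / (r' - r)⌉₊ : ℝ) ≤ k := by
      exact_mod_cast le_trans (le_max_right _ _) hk
    have hαr : α * r ≤ (r' - r) * k := by
      have h2 : α * r / (r' - r) ≤ (k : ℝ) := le_trans hN hkN
      rw [div_le_iff₀ (by linarith)] at h2
      linarith [h2]
    have hpk : r ^ k = r ^ (k - 1) * r := by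
      conv_lhs => rw [show k = (k - 1) + 1 by omega]
      rw [pow_succ]
    have hval : u (k + 1) = c k * (α + k) * r ^ k := by
      simp only [hu_def]
      have : (k + 1 : ℕ) - 1 = k := rfl
      rw [this, show c (k + 1) * ((k + 1 : ℕ) * r ^ k) = (c (k + 1) * ((k : ℝ) + 1)) * r ^ k by push_cast; ring,
        hcrec k]
    have hu_nonneg : ∀ m, 0 ≤ u m := by
      intro m
      exact mul_nonneg (le_of_lt (hc m)) (by positivity)
    rw [Real.norm_of_nonneg (hu_nonneg _), Real.norm_of_nonneg (hu_nonneg _), hval]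
    have key : (α + k) * r ≤ r' * k := by
      have : (α + k) * r = α * r + k * r := by ring
      rw [this]
      nlinarith [hαr]
    calc c k * (α + k) * r ^ k = (c k * r ^ (k - 1)) * ((α + k) * r) := by rw [hpk]; ring
      _ ≤ (c k * r ^ (k - 1)) * (r' * k) := by
          exact mul_le_mul_of_nonneg_left key (mul_nonneg (le_of_lt (hc k)) (by positivity))
      _ = r' * (c k * (k * r ^ (k - 1))) := by ring
  have hbound : ∀ (k : ℕ) (y : ℝ), y ∈ Set.Ioo (-r) r →
      ‖c k * ((k : ℝ) * y ^ (k - 1))‖ ≤ u k := by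
    intro k y hy
    have hyr : |y| ≤ r := by
      rw [abs_le]
      exact ⟨le_of_lt hy.1, le_of_lt hy.2⟩
    rw [norm_mul, norm_mul, Real.norm_of_nonneg (le_of_lt (hc k)),
      Real.norm_of_nonneg (by positivity : (0:ℝ) ≤ (k : ℝ)), norm_pow]
    simp only [hu_def]
    have : ‖y‖ ^ (k - 1) ≤ r ^ (k - 1) := by
      apply pow_le_pow_left₀ (norm_nonneg y) hyr
    have hck := le_of_lt (hc k)
    apply mul_le_mul_of_nonneg_left _ hck
    apply mul_le_mul_of_nonneg_left this (by positivity)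
  have hg0 : Summable (fun k => c k * (0 : ℝ) ^ k) := by
    apply summable_of_ne_finset_zero (s := {0})
    intro k hk
    simp only [Finset.mem_singleton] at hk
    rw [zero_pow hk, mul_zero]
  have h0mem : (0 : ℝ) ∈ Set.Ioo (-r) r := ⟨by linarith, hr0⟩
  have hder : ∀ y ∈ Set.Ioo (-r) r,
      HasDerivAt (fun y' => ∑' k : ℕ, c k * y' ^ k) (∑' k : ℕ, c k * ((k : ℝ) * y ^ (k - 1))) y := by
    intro y hy
    exact hasDerivAt_tsum_of_isPreconnected hu isOpen_Ioo (convex_Ioo _ _).isPreconnected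
      (fun k y' _ => (hasDerivAt_pow k y').const_mul (c k)) hbound h0mem hg0 hy
  set F : ℝ → ℝ := fun y => ∑' k : ℕ, c k * y ^ k with hF_def
  have hkey : ∀ y ∈ Set.Ioo (-r) r,
      (1 - y) * (∑' k : ℕ, c k * ((k : ℝ) * y ^ (k - 1))) = α * F y := by
    intro y hy
    have S1 : Summable (fun k : ℕ => c k * ((k : ℝ) * y ^ (k - 1))) :=
      Summable.of_norm_bounded hu (fun k => hbound k y hy)
    have SF : Summable (fun k : ℕ => c k * y ^ k) := by
      refine summable_of_summable_hasDerivAt_of_isPreconnected hu isOpen_Ioo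
        (convex_Ioo _ _).isPreconnected
        (fun k y' _ => (hasDerivAt_pow k y').const_mul (c k)) hbound h0mem hg0 hy
    have S1' : Summable (fun k : ℕ => c (k + 1) * (((k : ℝ) + 1) * y ^ k)) := by
      have h := (summable_nat_add_iff 1).mpr S1
      refine h.congr fun k => ?_
      push_cast
      rfl
    have S2 : Summable (fun k : ℕ => c k * (α + k) * y ^ k) := by
      refine S1'.congr fun k => ?_
      linear_combination y ^ k * hcrec k
    have S3 : Summable (fun k : ℕ => c k * (k : ℝ) * y ^ k) := by
      refine (S1.mul_left y).congr fun k => ?_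
      cases k with
      | zero => simp
      | succ j =>
        push_cast
        rw [pow_succ]
        ring
    have hshift : (∑' k : ℕ, c k * ((k : ℝ) * y ^ (k - 1))) = ∑' k : ℕ, c k * (α + k) * y ^ k := by
      rw [S1.tsum_eq_zero_add]
      simp only [Nat.cast_zero, zero_mul, mul_zero, zero_add]
      refine tsum_congr fun k => ?_
      push_cast
      linear_combination y ^ k * hcrec k
    have hyD : y * (∑' k : ℕ, c k * ((k : ℝ) * y ^ (k - 1))) = ∑' k : ℕ, c k * (k : ℝ) * y ^ k := by
      rw [← tsum_mul_left]
      refine tsum_congr fun k => ?_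
      cases k with
      | zero => simp
      | succ j =>
        push_cast
        rw [pow_succ]
        ring
    have expand : (1 - y) * (∑' k : ℕ, c k * ((k : ℝ) * y ^ (k - 1)))
        = (∑' k : ℕ, c k * (α + k) * y ^ k) - ∑' k : ℕ, c k * (k : ℝ) * y ^ k := by
      rw [← hshift, ← hyD]
      ring
    rw [expand, ← S2.tsum_sub S3]
    have : ∀ k : ℕ, c k * (α + k) * y ^ k - c k * (k : ℝ) * y ^ k = α * (c k * y ^ k) := by
      intro k; ring
    rw [tsum_congr this, tsum_mul_left]
  -- derivative of the product is zero on [0, t]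
  have hIccIoo : Set.Icc (0 : ℝ) t ⊆ Set.Ioo (-r) r := by
    intro y hy
    exact ⟨by linarith [hy.1], by linarith [hy.2]⟩
  set g : ℝ → ℝ := fun y => F y * (1 - y) ^ α with hg_def
  have hderg : ∀ y ∈ Set.Icc (0 : ℝ) t, HasDerivAt g 0 y := by
    intro y hy
    have hy' := hIccIoo hy
    have h1y : 0 < 1 - y := by
      have := hy.2
      linarith
    have hF := hder y hy'
    have hin : HasDerivAt (fun y' : ℝ => 1 - y') (-1) y := by
      simpa using (hasDerivAt_id y).const_sub 1
    have hrpow := hin.rpow_const (p := α) (Or.inl (ne_of_gt h1y))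
    have total := hF.mul hrpow
    have hzero : (∑' k : ℕ, c k * ((k : ℝ) * y ^ (k - 1))) * (1 - y) ^ α
        + F y * (-1 * α * (1 - y) ^ (α - 1)) = 0 := by
      have hsplit : (1 - y) ^ α = (1 - y) ^ (α - 1) * (1 - y) := by
        rw [← Real.rpow_add_one (ne_of_gt h1y), sub_add_cancel]
      rw [hsplit]
      linear_combination (1 - y) ^ (α - 1) * hkey y hy'
    rw [hzero] at total
    exact total
  have hconst := constant_of_has_deriv_right_zero
    (f := g) (a := 0) (b := t)
    (fun y hy => ((hderg y hy).continuousAt).continuousWithinAt)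
    (fun y hy => ((hderg y (Set.mem_Icc.mpr ⟨hy.1, le_of_lt hy.2⟩)).hasDerivWithinAt))
    t (Set.mem_Icc.mpr ⟨h0, le_rfl⟩)
  have hF0 : F 0 = 1 := by
    have hF0' : F 0 = ∑' k : ℕ, c k * (0 : ℝ) ^ k := rfl
    rw [hF0', tsum_eq_single 0 (fun k hk => by rw [zero_pow hk, mul_zero])]
    simp [hc_def, pochR_zero]
  have hg0' : g 0 = 1 := by
    simp only [hg_def, sub_zero, Real.one_rpow, mul_one, hF0]
  rw [hg0'] at hconst
  -- conclude
  have h1t : 0 < 1 - t := by linarith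
  have hA : (1 - t) ^ α ≠ 0 := ne_of_gt (Real.rpow_pos_of_pos h1t α)
  have : F t = ((1 - t) ^ α)⁻¹ := by
    have h2 : F t * (1 - t) ^ α = 1 := hconst
    field_simp at h2 ⊢
    linarith [h2]
  rw [Real.rpow_neg (le_of_lt h1t)]
  exact this

lemma nb_pgf (α p z : ℝ) (hα : 0 < α) (hp0 : 0 < p) (hp1 : p < 1)
    (hz0 : 0 ≤ z) (hz1 : z ≤ 1) :
    ∑' k : ℕ, nbPmf α p k * z ^ k = (p / (1 - (1 - p) * z)) ^ α := by
  set t : ℝ := (1 - p) * z with ht_def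
  have ht0 : 0 ≤ t := mul_nonneg (by linarith) hz0
  have ht1 : t < 1 := by
    have : t ≤ (1 - p) * 1 := mul_le_mul_of_nonneg_left hz1 (by linarith)
    nlinarith
  have hG : Real.Gamma α ≠ 0 := ne_of_gt (Real.Gamma_pos_of_pos hα)
  have hterm : ∀ k : ℕ, nbPmf α p k * z ^ k
      = p ^ α * (pochR k α / (Nat.factorial k) * t ^ k) := by
    intro k
    rw [nbPmf, Gamma_add_nat hα k, ht_def, mul_pow]
    have hf : ((Nat.factorial k : ℝ)) ≠ 0 := Nat.cast_ne_zero.mpr (Nat.factorial_ne_zero k)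
    field_simp
  rw [tsum_congr hterm, tsum_mul_left, binom_tsum α hα ht0 ht1,
    Real.div_rpow (le_of_lt hp0) (by linarith : (0:ℝ) ≤ 1 - t),
    Real.rpow_neg (by linarith : (0:ℝ) ≤ 1 - t), div_eq_mul_inv]

/-- Conditional pgf of the NB thinning process:
`E[z^{X_t} | X_{t-1} = x] = (p/(1-qz))^{θ(1-ρ)} ₂F₁(θρ, -x; θ; 1-z)`. -/
theorem nb_thinning_conditional_pgf
    (θ ρ p z : ℝ) (hθ : 0 < θ) (hρ0 : 0 < ρ) (hρ1 : ρ < 1)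
    (hp0 : 0 < p) (hp1 : p < 1) (hz : z ∈ Set.Icc (0 : ℝ) 1) (x : ℕ) :
    (∑ k ∈ Finset.range (x + 1), betaBinPmf x (θ * ρ) (θ * (1 - ρ)) k * z ^ k) *
        (∑' k : ℕ, nbPmf (θ * (1 - ρ)) p k * z ^ k)
      = (p / (1 - (1 - p) * z)) ^ (θ * (1 - ρ)) * hyp2F1neg (θ * ρ) x θ (1 - z) := by
  obtain ⟨hz0, hz1⟩ := hz
  have ha : 0 < θ * ρ := by nlinarith
  have hb : 0 < θ * (1 - ρ) := by nlinarith
  rw [betaBin_pgf (θ * ρ) (θ * (1 - ρ)) z ha hb x,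
    nb_pgf (θ * (1 - ρ)) p z hb hp0 hp1 hz0 hz1,
    show θ * ρ + θ * (1 - ρ) = θ by ring]
  exact mul_comm _ _
end

section
/- For the negative binomial thinning process at three consecutive times, P[X₁ = 0 and X₃ = 0 | X₂ = 2] = [p^{θ(1-ρ)}(1-ρ)]² · [(1+θ(1-ρ))/(1+θ)]². -/
/-- For the NB thinning process: given `X₂ = 2`, the variables `X₁, X₃` are iid,
each distributed as `ξ + ζ` with `ξ ~ BetaBinomial(2; θρ, θ(1-ρ))` and
`ζ ~ NB(θ(1-ρ), p)` independent; then
`P[X₁ = 0, X₃ = 0 | X₂ = 2] = [p^{θ(1-ρ)}(1-ρ)]² [(1+θ(1-ρ))/(1+θ)]²`. -/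
theorem nb_thinning_cond_prob_020
    (θ ρ p : ℝ) (hθ : 0 < θ) (hρ0 : 0 < ρ) (hρ1 : ρ < 1)
    (hp0 : 0 < p) (hp1 : p < 1) :
    (betaBinPmf 2 (θ * ρ) (θ * (1 - ρ)) 0 * nbPmf (θ * (1 - ρ)) p 0) ^ 2
      = (p ^ (θ * (1 - ρ)) * (1 - ρ)) ^ 2 * ((1 + θ * (1 - ρ)) / (1 + θ)) ^ 2 := by
  set a := θ * ρ with ha
  set b := θ * (1 - ρ) with hb
  have hbpos : 0 < b := mul_pos hθ (by linarith)
  have hapos : 0 < a := mul_pos hθ hρ0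
  have habpos : 0 < a + b := by linarith
  have hab : a + b = θ := by rw [ha, hb]; ring
  have hΓb : Real.Gamma b ≠ 0 := (Real.Gamma_pos_of_pos hbpos).ne'
  have hΓa : Real.Gamma a ≠ 0 := (Real.Gamma_pos_of_pos hapos).ne'
  have hΓab : Real.Gamma (a + b) ≠ 0 := (Real.Gamma_pos_of_pos habpos).ne'
  have hb2 : Real.Gamma (b + 2) = (b + 1) * b * Real.Gamma b := by
    have h1 : Real.Gamma (b + 1) = b * Real.Gamma b := Real.Gamma_add_one hbpos.ne'
    have h2 : Real.Gamma (b + 1 + 1) = (b + 1) * Real.Gamma (b + 1) :=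
      Real.Gamma_add_one (by linarith)
    have : b + 2 = b + 1 + 1 := by ring
    rw [this, h2, h1]; ring
  have hab2 : Real.Gamma (a + b + 2) = (a + b + 1) * (a + b) * Real.Gamma (a + b) := by
    have h1 : Real.Gamma (a + b + 1) = (a + b) * Real.Gamma (a + b) :=
      Real.Gamma_add_one habpos.ne'
    have h2 : Real.Gamma (a + b + 1 + 1) = (a + b + 1) * Real.Gamma (a + b + 1) :=
      Real.Gamma_add_one (by linarith)
    have : a + b + 2 = a + b + 1 + 1 := by ring
    rw [this, h2, h1]; ring
  have hbase : betaBinPmf 2 a b 0 * nbPmf b p 0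
      = p ^ b * (1 - ρ) * ((1 + b) / (1 + θ)) := by
    have h1 : betaBinPmf 2 a b 0 = (b + 1) * b / ((a + b + 1) * (a + b)) := by
      simp only [betaBinPmf, betaFn, Nat.choose, Nat.cast_one, CharP.cast_eq_zero]
      norm_num
      rw [show a + (b + 2) = a + b + 2 by ring, hb2, hab2]
      field_simp
    have h2 : nbPmf b p 0 = p ^ b := by
      simp [nbPmf, div_self hΓb]
    rw [h1, h2, hab]
    have hθ1 : (1 : ℝ) + θ ≠ 0 := by linarith
    have : b = θ * (1 - ρ) := hb
    field_simp
    rw [this]; ring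
  rw [hbase, mul_pow]
end

section
/- Let ζ₁, ζ₂, ζ₃, ζ₁₂, ζ₂₃, ζ₁₂₃ be independent with ζ₁,ζ₃ ~ NB(θ(1-ρ),p), ζ₂ ~ NB(θ(1-ρ)²,p), ζ₁₂,ζ₂₃ ~ NB(θρ(1-ρ),p), ζ₁₂₃ ~ NB(θρ²,p), and set X₁ = ζ₁+ζ₁₂+ζ₁₂₃, X₂ = ζ₂+ζ₁₂+ζ₂₃+ζ₁₂₃, X₃ = ζ₃+ζ₂₃+ζ₁₂₃. Then P[X₁=0, X₃=0 | X₂=2] = [p^{θ(1-ρ)}(1-ρ)]² · (1+θ(1-ρ)²)/(1+θ). -/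
/-- Joint pmf of the six independent components `(ζ₁, ζ₂, ζ₃, ζ₁₂, ζ₂₃, ζ₁₂₃)` of
the random-measure negative binomial process at three consecutive times. -/
noncomputable def rmJoint (θ ρ p : ℝ) : ℕ × ℕ × ℕ × ℕ × ℕ × ℕ → ℝ
  | (a, b, c, d, e, f) =>
      nbPmf (θ * (1 - ρ)) p a * nbPmf (θ * (1 - ρ) ^ 2) p b *
        nbPmf (θ * (1 - ρ)) p c * nbPmf (θ * ρ * (1 - ρ)) p d *
        nbPmf (θ * ρ * (1 - ρ)) p e * nbPmf (θ * ρ ^ 2) p f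

open MeasureTheory Set in
lemma hasSum_gammaSeries {α x : ℝ} (hα : 0 < α) (hx0 : 0 ≤ x) (hx1 : x < 1) :
    HasSum (fun k : ℕ => Real.Gamma (α + k) * x ^ k / (Nat.factorial k))
      ((1 / (1 - x)) ^ α * Real.Gamma α) := by
  set r : ℝ := 1 - x with hrdef
  have hr : 0 < r := by simp [hrdef]; linarith
  set g : ℕ → ℝ := fun k => Real.Gamma (α + k) * x ^ k / (Nat.factorial k) with hg
  have hgnn : ∀ k, 0 ≤ g k := fun k => by
    have : (0:ℝ) < α + k := by positivity
    have := Real.Gamma_pos_of_pos this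
    positivity
  set F : ℕ → ℝ → ENNReal := fun k t =>
    ENNReal.ofReal ((Real.exp (-t) * t ^ (α + k - 1)) * (x ^ k / (Nat.factorial k))) with hF
  have hpos : ∀ k : ℕ, (0:ℝ) < α + k := fun k => by positivity
  have intK : ∀ k : ℕ, IntegrableOn
      (fun t : ℝ => Real.exp (-t) * t ^ (α + (k:ℝ) - 1)) (Ioi 0) := by
    intro k
    have := Real.GammaIntegral_convergent (hpos k)
    simpa using this
  have key : ∀ k : ℕ, ∫ t in Ioi (0:ℝ),
      (Real.exp (-t) * t ^ (α + (k:ℝ) - 1)) * (x ^ k / (Nat.factorial k)) = g k := by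
    intro k
    rw [MeasureTheory.integral_mul_const, ← Real.Gamma_eq_integral (hpos k)]
    rw [hg]; ring
  have hFk : ∀ k : ℕ, ∫⁻ t in Ioi (0:ℝ), F k t = ENNReal.ofReal (g k) := by
    intro k
    rw [hF]
    rw [← MeasureTheory.ofReal_integral_eq_lintegral_ofReal ((intK k).mul_const _) ?_, key k]
    · filter_upwards [ae_restrict_mem measurableSet_Ioi] with t ht
      have ht' : (0:ℝ) < t := ht
      positivity
  have hmeas : ∀ k : ℕ, AEMeasurable (F k) (volume.restrict (Ioi 0)) := by
    intro k
    apply Measurable.aemeasurable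
    fun_prop
  have pointwise : ∀ t ∈ Ioi (0:ℝ), ∑' k, F k t =
      ENNReal.ofReal (t ^ (α - 1) * Real.exp (-(r * t))) := by
    intro t ht
    have ht' : (0:ℝ) < t := ht
    have h1 : ∀ k : ℕ, (Real.exp (-t) * t ^ (α + (k:ℝ) - 1)) * (x ^ k / (Nat.factorial k))
        = (Real.exp (-t) * t ^ (α - 1)) * ((x * t) ^ k / (Nat.factorial k)) := by
      intro k
      rw [show α + (k:ℝ) - 1 = (α - 1) + k by ring, Real.rpow_add ht', Real.rpow_natCast,
        mul_pow]
      ring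
    have hsumexp : Summable (fun k : ℕ => ((x * t) ^ k / (Nat.factorial k) : ℝ)) := by
      simpa using Real.summable_pow_div_factorial (x * t)
    have he : ∑' k : ℕ, ((x * t) ^ k / (Nat.factorial k) : ℝ) = Real.exp (x * t) := by
      rw [Real.exp_eq_exp_ℝ, NormedSpace.exp_eq_tsum ℝ]
      exact tsum_congr fun k => by rw [smul_eq_mul, div_eq_inv_mul]
    calc ∑' k, F k t
        = ∑' k, ENNReal.ofReal ((Real.exp (-t) * t ^ (α - 1)) * ((x * t) ^ k / (Nat.factorial k))) := by
          exact tsum_congr fun k => congrArg ENNReal.ofReal (h1 k)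
      _ = ENNReal.ofReal (∑' k : ℕ, (Real.exp (-t) * t ^ (α - 1)) * ((x * t) ^ k / (Nat.factorial k))) := by
          refine (ENNReal.ofReal_tsum_of_nonneg (fun k => by positivity) (hsumexp.mul_left _)).symm
      _ = ENNReal.ofReal (t ^ (α - 1) * Real.exp (-(r * t))) := by
          rw [tsum_mul_left, he]
          congr 1
          rw [show -(r * t) = x * t + -t by rw [hrdef]; ring, Real.exp_add]
          ring
  have hintR : IntegrableOn (fun t : ℝ => t ^ (α - 1) * Real.exp (-(r * t))) (Ioi 0) := by
    have := integrableOn_rpow_mul_exp_neg_mul_rpow (s := α - 1) (p := 1)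
      (by linarith : (-1:ℝ) < α - 1) one_pos hr
    simpa [Real.rpow_one, neg_mul] using this
  have finalInt : ∫⁻ t in Ioi (0:ℝ), ENNReal.ofReal (t ^ (α - 1) * Real.exp (-(r * t)))
      = ENNReal.ofReal ((1 / r) ^ α * Real.Gamma α) := by
    rw [← MeasureTheory.ofReal_integral_eq_lintegral_ofReal hintR ?_,
      Real.integral_rpow_mul_exp_neg_mul_Ioi hα hr]
    · filter_upwards [ae_restrict_mem measurableSet_Ioi] with t ht
      have ht' : (0:ℝ) < t := ht
      positivity
  have combined : ∑' k, ENNReal.ofReal (g k) = ENNReal.ofReal ((1 / r) ^ α * Real.Gamma α) := by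
    calc ∑' k, ENNReal.ofReal (g k) = ∑' k, ∫⁻ t in Ioi (0:ℝ), F k t :=
          tsum_congr fun k => (hFk k).symm
      _ = ∫⁻ t in Ioi (0:ℝ), ∑' k, F k t := (MeasureTheory.lintegral_tsum hmeas).symm
      _ = ∫⁻ t in Ioi (0:ℝ), ENNReal.ofReal (t ^ (α - 1) * Real.exp (-(r * t))) := by
          refine setLIntegral_congr_fun measurableSet_Ioi ?_
          exact pointwise
      _ = ENNReal.ofReal ((1 / r) ^ α * Real.Gamma α) := finalInt
  have hsummable : Summable g := by
    have h1 : (∑' k, ENNReal.ofReal (g k)) ≠ ⊤ := by rw [combined]; exact ENNReal.ofReal_ne_top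
    have h2 := ENNReal.summable_toReal h1
    exact h2.congr fun k => ENNReal.toReal_ofReal (hgnn k)
  have htsum : ∑' k, g k = (1 / r) ^ α * Real.Gamma α := by
    have h2 := congrArg ENNReal.toReal combined
    rw [ENNReal.tsum_toReal_eq (fun k => ENNReal.ofReal_ne_top)] at h2
    have hv : (0:ℝ) ≤ (1 / r) ^ α * Real.Gamma α := by positivity
    rw [ENNReal.toReal_ofReal hv] at h2
    rw [← h2]
    exact tsum_congr fun k => (ENNReal.toReal_ofReal (hgnn k)).symm
  exact htsum ▸ hsummable.hasSum

lemma nbPmf_nonneg {α p : ℝ} (hα : 0 < α) (hp0 : 0 < p) (hp1 : p < 1) (k : ℕ) :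
    0 ≤ nbPmf α p k := by
  have h1 : (0:ℝ) < α + k := by positivity
  have h2 := Real.Gamma_pos_of_pos h1
  have h3 := Real.Gamma_pos_of_pos hα
  have h4 : (0:ℝ) ≤ 1 - p := by linarith
  unfold nbPmf
  positivity

lemma hasSum_nbPmf {α p : ℝ} (hα : 0 < α) (hp0 : 0 < p) (hp1 : p < 1) :
    HasSum (nbPmf α p) 1 := by
  have hΓ : Real.Gamma α ≠ 0 := (Real.Gamma_pos_of_pos hα).ne'
  have h := (hasSum_gammaSeries hα (x := 1 - p) (by linarith) (by linarith)).mul_right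
    (p ^ α / Real.Gamma α)
  have h1r : (1:ℝ) - (1 - p) = p := by ring
  rw [h1r] at h
  have hval : ((1 / p) ^ α * Real.Gamma α) * (p ^ α / Real.Gamma α) = 1 := by
    have h1 : ((1 / p) ^ α : ℝ) * p ^ α = 1 := by
      rw [← Real.mul_rpow (by positivity) hp0.le, one_div, inv_mul_cancel₀ hp0.ne',
        Real.one_rpow]
    calc (1 / p) ^ α * Real.Gamma α * (p ^ α / Real.Gamma α)
        = ((1 / p) ^ α * p ^ α) * (Real.Gamma α / Real.Gamma α) := by ring
      _ = 1 := by rw [h1, div_self hΓ]; ring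
  rw [hval] at h
  refine h.congr_fun fun k => ?_
  unfold nbPmf
  have hk : ((Nat.factorial k : ℝ)) ≠ 0 := Nat.cast_ne_zero.mpr (Nat.factorial_ne_zero k)
  field_simp

lemma nbPmf_zero {α p : ℝ} (hα : 0 < α) : nbPmf α p 0 = p ^ α := by
  have hΓ : Real.Gamma α ≠ 0 := (Real.Gamma_pos_of_pos hα).ne'
  simp [nbPmf, div_self, hΓ]

lemma nbPmf_one {α p : ℝ} (hα : 0 < α) : nbPmf α p 1 = α * p ^ α * (1 - p) := by
  have hΓ : Real.Gamma α ≠ 0 := (Real.Gamma_pos_of_pos hα).ne'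
  have h1 : α + ((1:ℕ):ℝ) = α + 1 := by norm_num
  rw [nbPmf, h1, Real.Gamma_add_one hα.ne']
  rw [Nat.factorial_one]
  field_simp
  push_cast; ring

lemma nbPmf_two {α p : ℝ} (hα : 0 < α) :
    nbPmf α p 2 = (α * (α + 1) / 2) * p ^ α * (1 - p) ^ 2 := by
  have hΓ : Real.Gamma α ≠ 0 := (Real.Gamma_pos_of_pos hα).ne'
  have h1 : α + ((2:ℕ):ℝ) = (α + 1) + 1 := by push_cast; ring
  rw [nbPmf, h1, Real.Gamma_add_one (by positivity), Real.Gamma_add_one hα.ne']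
  have : ((Nat.factorial 2 : ℕ) : ℝ) = 2 := by norm_num [Nat.factorial]
  rw [this]
  field_simp
set_option maxHeartbeats 2000000 in
/-- For the random-measure NB process with `X₁ = ζ₁+ζ₁₂+ζ₁₂₃`,
`X₂ = ζ₂+ζ₁₂+ζ₂₃+ζ₁₂₃`, `X₃ = ζ₃+ζ₂₃+ζ₁₂₃`:
`P[X₁=0, X₃=0 | X₂=2] = [p^{θ(1-ρ)}(1-ρ)]² (1+θ(1-ρ)²)/(1+θ)`. -/
theorem nb_random_measure_cond_prob_020
    (θ ρ p : ℝ) (hθ : 0 < θ) (hρ0 : 0 < ρ) (hρ1 : ρ < 1)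
    (hp0 : 0 < p) (hp1 : p < 1) :
    (∑' v : ℕ × ℕ × ℕ × ℕ × ℕ × ℕ,
        if v.1 + v.2.2.2.1 + v.2.2.2.2.2 = 0 ∧
            v.2.2.1 + v.2.2.2.2.1 + v.2.2.2.2.2 = 0 ∧
            v.2.1 + v.2.2.2.1 + v.2.2.2.2.1 + v.2.2.2.2.2 = 2
          then rmJoint θ ρ p v else 0) /
      (∑' v : ℕ × ℕ × ℕ × ℕ × ℕ × ℕ,
        if v.2.1 + v.2.2.2.1 + v.2.2.2.2.1 + v.2.2.2.2.2 = 2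
          then rmJoint θ ρ p v else 0)
      = (p ^ (θ * (1 - ρ)) * (1 - ρ)) ^ 2 * (1 + θ * (1 - ρ) ^ 2) / (1 + θ) := by
  have hα₁ : (0:ℝ) < θ * (1 - ρ) := by nlinarith
  have hβ : (0:ℝ) < θ * (1 - ρ) ^ 2 := by nlinarith
  have hγ : (0:ℝ) < θ * ρ * (1 - ρ) := by nlinarith
  have hδ : (0:ℝ) < θ * ρ ^ 2 := by nlinarith
  set α₁ := θ * (1 - ρ) with hα₁d
  set β := θ * (1 - ρ) ^ 2 with hβd
  set γ := θ * ρ * (1 - ρ) with hγd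
  set δ := θ * ρ ^ 2 with hδd
  -- Numerator
  have hnum : (∑' v : ℕ × ℕ × ℕ × ℕ × ℕ × ℕ,
        if v.1 + v.2.2.2.1 + v.2.2.2.2.2 = 0 ∧
            v.2.2.1 + v.2.2.2.2.1 + v.2.2.2.2.2 = 0 ∧
            v.2.1 + v.2.2.2.1 + v.2.2.2.2.1 + v.2.2.2.2.2 = 2
          then rmJoint θ ρ p v else 0)
      = rmJoint θ ρ p (0, 2, 0, 0, 0, 0) := by
    rw [tsum_eq_single ((0, 2, 0, 0, 0, 0) : ℕ × ℕ × ℕ × ℕ × ℕ × ℕ)]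
    · norm_num
    · rintro ⟨a, b, c, d, e, f⟩ hv
      split_ifs with h
      · exfalso; apply hv; simp only [Prod.mk.injEq]; simp only at h; omega
      · rfl
  -- factored inner sum over (b, d, e, f)
  set G : ℕ × ℕ × ℕ × ℕ → ℝ := fun w =>
    if w.1 + w.2.1 + w.2.2.1 + w.2.2.2 = 2 then
      nbPmf β p w.1 * nbPmf γ p w.2.1 * nbPmf γ p w.2.2.1 * nbPmf δ p w.2.2.2
    else 0 with hGdef
  set D : ℝ := (θ * (θ + 1) / 2) *
      (p ^ β * p ^ γ * p ^ γ * p ^ δ) * (1 - p) ^ 2 with hDdef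
  have hGnn : ∀ w, 0 ≤ G w := by
    intro w
    rw [hGdef]
    dsimp only
    split_ifs
    · have := nbPmf_nonneg hβ hp0 hp1 w.1
      have := nbPmf_nonneg hγ hp0 hp1 w.2.1
      have := nbPmf_nonneg hγ hp0 hp1 w.2.2.1
      have := nbPmf_nonneg hδ hp0 hp1 w.2.2.2
      positivity
    · exact le_rfl
  have hG : HasSum G D := by
    have hfin : ∀ w : ℕ × ℕ × ℕ × ℕ,
        w ∉ (Finset.range 3 ×ˢ Finset.range 3 ×ˢ Finset.range 3 ×ˢ Finset.range 3) → G w = 0 := by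
      rintro ⟨b, d, e, f⟩ hw
      rw [hGdef]
      dsimp only
      split_ifs with h
      · exfalso; apply hw; simp only [Finset.mem_product, Finset.mem_range]; omega
      · rfl
    have h : HasSum G _ := hasSum_sum_of_ne_finset_zero hfin
    convert h using 1
    rw [Finset.sum_product, hDdef]
    simp only [Finset.sum_product, Finset.sum_range_succ, Finset.sum_range_zero, hGdef]
    norm_num
    rw [nbPmf_zero hβ, nbPmf_zero hγ, nbPmf_zero hδ, nbPmf_one hβ, nbPmf_one hγ,
      nbPmf_one hδ, nbPmf_two hβ, nbPmf_two hγ, nbPmf_two hδ, hβd, hγd, hδd]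
    ring
  -- Denominator
  have hT := hasSum_nbPmf hα₁ hp0 hp1
  have hTnn : (0:ℕ → ℝ) ≤ nbPmf α₁ p := Pi.le_def.mpr fun k => nbPmf_nonneg hα₁ hp0 hp1 k
  have hGnn' : (0 : ℕ × ℕ × ℕ × ℕ → ℝ) ≤ G := Pi.le_def.mpr hGnn
  set K : ℕ × (ℕ × ℕ × ℕ × ℕ) → ℝ := fun u => nbPmf α₁ p u.1 * G u.2 with hKdef
  have hinner : HasSum K (1 * D) :=
    hT.mul hG (Summable.mul_of_nonneg hT.summable hG.summable hTnn hGnn')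
  have hKnn : (0 : ℕ × (ℕ × ℕ × ℕ × ℕ) → ℝ) ≤ K :=
    Pi.le_def.mpr fun u => mul_nonneg (nbPmf_nonneg hα₁ hp0 hp1 _) (hGnn _)
  have houter : HasSum (fun w : ℕ × ℕ × (ℕ × ℕ × ℕ × ℕ) =>
      nbPmf α₁ p w.1 * K w.2) (1 * (1 * D)) :=
    hT.mul hinner (Summable.mul_of_nonneg hT.summable hinner.summable hTnn hKnn)
  set E : (ℕ × ℕ × ℕ × ℕ × ℕ × ℕ) ≃ (ℕ × ℕ × ℕ × ℕ × ℕ × ℕ) :=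
    ⟨fun v => (v.1, v.2.2.1, v.2.1, v.2.2.2), fun v => (v.1, v.2.2.1, v.2.1, v.2.2.2),
      fun v => rfl, fun v => rfl⟩ with hEdef
  have heq : (fun v : ℕ × ℕ × ℕ × ℕ × ℕ × ℕ =>
      if v.2.1 + v.2.2.2.1 + v.2.2.2.2.1 + v.2.2.2.2.2 = 2 then rmJoint θ ρ p v else 0)
      = (fun w : ℕ × ℕ × (ℕ × ℕ × ℕ × ℕ) =>
          nbPmf α₁ p w.1 * K w.2) ∘ E := by
    funext v
    obtain ⟨a, b, c, d, e', f⟩ := v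
    simp only [Function.comp_apply, hEdef, Equiv.coe_fn_mk, hKdef, hGdef, rmJoint]
    split_ifs with h <;> ring
  have hden : (∑' v : ℕ × ℕ × ℕ × ℕ × ℕ × ℕ,
        if v.2.1 + v.2.2.2.1 + v.2.2.2.2.1 + v.2.2.2.2.2 = 2
          then rmJoint θ ρ p v else 0) = 1 * (1 * D) := by
    rw [heq]
    exact (E.hasSum_iff.mpr houter).tsum_eq
  -- Final computation
  rw [hnum, hden]
  have hv0 : rmJoint θ ρ p (0, 2, 0, 0, 0, 0)
      = p ^ α₁ * ((β * (β + 1) / 2) * p ^ β * (1 - p) ^ 2) * p ^ α₁ * p ^ γ * p ^ γ * p ^ δ := by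
    simp only [rmJoint, nbPmf_zero hα₁, nbPmf_zero hγ, nbPmf_zero hδ, nbPmf_two hβ]
    rw [nbPmf_zero hα₁, nbPmf_zero hγ, nbPmf_zero hδ, nbPmf_two hβ]
  rw [hv0, one_mul, one_mul, hDdef]
  have pα := Real.rpow_pos_of_pos hp0 α₁
  have pβ := Real.rpow_pos_of_pos hp0 β
  have pγ := Real.rpow_pos_of_pos hp0 γ
  have pδ := Real.rpow_pos_of_pos hp0 δ
  have h1p : (0:ℝ) < 1 - p := by linarith
  have h1θ : (0:ℝ) < 1 + θ := by linarith
  rw [div_eq_div_iff (by positivity) (by positivity)]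
  rw [hβd]
  ring
end

section
/- For all θ > 0 and 0 < ρ < 1, [(1+θ(1-ρ))/(1+θ)]² ≠ (1+θ(1-ρ)²)/(1+θ). Consequently the three-dimensional marginals of the negative binomial thinning process and the negative binomial random-measure process differ. -/
/-- For all `θ > 0` and `0 < ρ < 1`,
`[(1+θ(1-ρ))/(1+θ)]² ≠ (1+θ(1-ρ)²)/(1+θ)`; hence the three-dimensional marginals
of the NB thinning and NB random-measure processes differ. -/
theorem thinning_vs_random_measure_differ
    (θ ρ : ℝ) (hθ : 0 < θ) (hρ0 : 0 < ρ) (hρ1 : ρ < 1) :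
    ((1 + θ * (1 - ρ)) / (1 + θ)) ^ 2 ≠ (1 + θ * (1 - ρ) ^ 2) / (1 + θ) := by
  have h1 : (0:ℝ) < 1 + θ := by linarith
  intro h
  field_simp at h
  nlinarith [h, mul_pos hθ (mul_pos hρ0 hρ0), mul_pos h1 (mul_pos hθ (mul_pos hρ0 hρ0))]
end
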